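/- Let (f_n) be a sequence of positive reals such that lim_{n→∞} f_{n-1}/f_n = r for some r ∈ (0,1), ∑_{n=0}^{∞} f_n·r^{n+1} converges, and suppose (u_n), (v_n) satisfy 0 ≤ u_n, v_n ≤ f_n, with lim u_n/f_n = μ_U and lim v_n/f_n = μ_V, and additionally (1 - p·r) = 2q·∑_{k=0}^{∞} f_k·r^{k+1} where f satisfies f_n = p·f_{n-1} + q·∑_{k=0}^{n-1} f_k f_{n-k-1} for n ≥ 1 with integers p ≥ 0, q ≥ 1, f_0 ≥ 1. Define w_n = ∑_{k=0}^{n-1} u_k·v_{n-k-1} (w_0 = 0). Then lim_{n→∞} w_n/f_n exists and equals λ_V·μ_U + λ_U·μ_V, where λ_U = ∑ u_n r^{n+1} and λ_V = ∑ v_n r^{n+1}. -/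

import Mathlib

open Filter

theorem stmt_12 (p q : ℕ) (hq : 1 ≤ q)
    (f : ℕ → ℝ) (hfpos : ∀ n, 0 < f n) (hf0 : 1 ≤ f 0)
    (hfrec : ∀ n : ℕ, f (n + 1) = p * f n + q * ∑ k ∈ Finset.range (n + 1), f k * f (n - k))
    (r : ℝ) (hr : r ∈ Set.Ioo (0 : ℝ) 1)
    (hratio : Tendsto (fun n : ℕ => f n / f (n + 1)) atTop (nhds r))
    (hsum : Summable (fun n : ℕ => f n * r ^ (n + 1)))
    (hgen : 1 - (p : ℝ) * r = 2 * q * ∑' k : ℕ, f k * r ^ (k + 1))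
    (u v : ℕ → ℝ)
    (hu : ∀ n, 0 ≤ u n ∧ u n ≤ f n) (hv : ∀ n, 0 ≤ v n ∧ v n ≤ f n)
    (muU muV : ℝ)
    (hmuU : Tendsto (fun n : ℕ => u n / f n) atTop (nhds muU))
    (hmuV : Tendsto (fun n : ℕ => v n / f n) atTop (nhds muV))
    (w : ℕ → ℝ) (hw0 : w 0 = 0)
    (hw : ∀ n : ℕ, w (n + 1) = ∑ k ∈ Finset.range (n + 1), u k * v (n - k)) :
    Tendsto (fun n : ℕ => w n / f n) atTop
      (nhds ((∑' n : ℕ, v n * r ^ (n + 1)) * muU + (∑' n : ℕ, u n * r ^ (n + 1)) * muV)) := by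
  obtain ⟨hr0, hr1⟩ := hr
  have hfne : ∀ n, f n ≠ 0 := fun n => (hfpos n).ne'
  have hq0 : (q : ℝ) ≠ 0 := by positivity
  have hsU : Summable (fun n : ℕ => u n * r ^ (n + 1)) := by
    apply Summable.of_nonneg_of_le (fun n => mul_nonneg (hu n).1 (by positivity)) _ hsum
    exact fun n => mul_le_mul_of_nonneg_right (hu n).2 (by positivity)
  have hsV : Summable (fun n : ℕ => v n * r ^ (n + 1)) := by
    apply Summable.of_nonneg_of_le (fun n => mul_nonneg (hv n).1 (by positivity)) _ hsum
    exact fun n => mul_le_mul_of_nonneg_right (hv n).2 (by positivity)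
  set L := ∑' k : ℕ, f k * r ^ (k + 1) with hL
  set lU := ∑' n : ℕ, u n * r ^ (n + 1) with hlU
  set lV := ∑' n : ℕ, v n * r ^ (n + 1) with hlV
  have hmuU0 : 0 ≤ muU := ge_of_tendsto' hmuU fun n => div_nonneg (hu n).1 (hfpos n).le
  have hmuU1 : muU ≤ 1 := le_of_tendsto' hmuU fun n => (div_le_one (hfpos n)).mpr (hu n).2
  have hmuV0 : 0 ≤ muV := ge_of_tendsto' hmuV fun n => div_nonneg (hv n).1 (hfpos n).le
  have hmuV1 : muV ≤ 1 := le_of_tendsto' hmuV fun n => (div_le_one (hfpos n)).mpr (hv n).2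
  have ratio_k : ∀ k : ℕ, Tendsto (fun n : ℕ => f (n - k) / f (n + 1)) atTop (nhds (r ^ (k + 1))) := by
    intro k
    induction k with
    | zero => simpa using hratio
    | succ k ih =>
      have h1 : Tendsto (fun n : ℕ => f (n - (k + 1)) / f (n - k)) atTop (nhds r) := by
        refine (hratio.comp (tendsto_sub_atTop_nat (k + 1))).congr' ?_
        filter_upwards [eventually_ge_atTop (k + 1)] with n hn
        have : n - (k + 1) + 1 = n - k := by omega
        simp [Function.comp, this]
      have h2 := h1.mul ih
      have h3 : r * r ^ (k + 1) = r ^ (k + 1 + 1) := by ring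
      rw [h3] at h2
      refine h2.congr fun n => ?_
      exact div_mul_div_cancel₀ (hfne (n - k))
  have conv_end : ∀ (a b : ℕ → ℝ) (μ : ℝ),
      Tendsto (fun n : ℕ => b n / f n) atTop (nhds μ) → ∀ m : ℕ,
      Tendsto (fun n : ℕ => ∑ k ∈ Finset.range m, a k * (b (n - k) / f (n + 1))) atTop
        (nhds (μ * ∑ k ∈ Finset.range m, a k * r ^ (k + 1))) := by
    intro a b μ hb m
    rw [Finset.mul_sum]
    apply tendsto_finset_sum
    intro k _
    have h1 : Tendsto (fun n : ℕ => b (n - k) / f (n - k)) atTop (nhds μ) :=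
      hb.comp (tendsto_sub_atTop_nat k)
    have h2 := ((h1.mul (ratio_k k)).const_mul (a k))
    have h3 : a k * (μ * r ^ (k + 1)) = μ * (a k * r ^ (k + 1)) := by ring
    rw [h3] at h2
    refine h2.congr fun n => ?_
    rw [div_mul_div_cancel₀ (hfne (n - k))]
  have hSfull : Tendsto (fun n : ℕ => ∑ k ∈ Finset.range (n + 1), f k * f (n - k) / f (n + 1))
      atTop (nhds (2 * L)) := by
    have key : ∀ n : ℕ, ∑ k ∈ Finset.range (n + 1), f k * f (n - k) / f (n + 1)
        = (1 - p * (f n / f (n + 1))) / q := by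
      intro n
      have hs : (∑ k ∈ Finset.range (n + 1), f k * f (n - k)) = (f (n + 1) - p * f n) / q := by
        rw [eq_div_iff hq0]
        linear_combination -hfrec n
      have hfn1 : f (n + 1) ≠ 0 := hfne (n + 1)
      have e : (1 : ℝ) - p * (f n / f (n + 1)) = (f (n + 1) - p * f n) / f (n + 1) := by
        rw [sub_div, div_self hfn1, mul_div_assoc]
      rw [← Finset.sum_div, hs, e, div_div, div_div, mul_comm (q : ℝ) (f (n + 1))]
    have h1 : Tendsto (fun n : ℕ => (1 - (p : ℝ) * (f n / f (n + 1))) / q) atTop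
        (nhds ((1 - (p : ℝ) * r) / q)) :=
      (tendsto_const_nhds.sub (hratio.const_mul _)).div_const _
    have h2 : (1 - (p : ℝ) * r) / q = 2 * L := by
      rw [hgen]; field_simp
    rw [h2] at h1
    exact h1.congr fun n => (key n).symm
  rw [← tendsto_add_atTop_iff_nat 1]
  have hT : (fun n : ℕ => w (n + 1) / f (n + 1))
      = fun n : ℕ => ∑ k ∈ Finset.range (n + 1), u k * v (n - k) / f (n + 1) := by
    funext n; rw [hw n, Finset.sum_div]
  rw [hT]
  rw [Metric.tendsto_atTop]
  intro ε hε
  set ε' := ε / 8 with hε'def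
  have hε' : 0 < ε' := by positivity
  have hfself : Tendsto (fun n : ℕ => f n / f n) atTop (nhds (1 : ℝ)) :=
    tendsto_const_nhds.congr fun n => (div_self (hfne n)).symm
  obtain ⟨M1, hM1⟩ := Metric.tendsto_atTop.mp hsum.hasSum.tendsto_sum_nat ε' hε'
  obtain ⟨M2, hM2⟩ := Metric.tendsto_atTop.mp hsU.hasSum.tendsto_sum_nat ε' hε'
  obtain ⟨M3, hM3⟩ := Metric.tendsto_atTop.mp hsV.hasSum.tendsto_sum_nat ε' hε'
  set M := max M1 (max M2 M3) with hMdef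
  have hML : |(∑ k ∈ Finset.range M, f k * r ^ (k + 1)) - L| < ε' := by
    have := hM1 M (le_max_left _ _); rwa [Real.dist_eq] at this
  have hMU : |(∑ k ∈ Finset.range M, u k * r ^ (k + 1)) - lU| < ε' := by
    have := hM2 M (le_trans (le_max_left _ _) (le_max_right _ _)); rwa [Real.dist_eq] at this
  have hMV : |(∑ k ∈ Finset.range M, v k * r ^ (k + 1)) - lV| < ε' := by
    have := hM3 M (le_trans (le_max_right _ _) (le_max_right _ _)); rwa [Real.dist_eq] at this
  have hpartle : ∀ (c : ℕ → ℝ), (∀ n, 0 ≤ c n) → Summable (fun n => c n * r ^ (n + 1)) →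
      ∑ k ∈ Finset.range M, c k * r ^ (k + 1) ≤ ∑' n : ℕ, c n * r ^ (n + 1) := by
    intro c hc hsc
    exact Summable.sum_le_tsum _ (fun i _ => mul_nonneg (hc i) (by positivity)) hsc
  have hsUle : ∑ k ∈ Finset.range M, u k * r ^ (k + 1) ≤ lU := hpartle u (fun n => (hu n).1) hsU
  have hsVle : ∑ k ∈ Finset.range M, v k * r ^ (k + 1) ≤ lV := hpartle v (fun n => (hv n).1) hsV
  have hEU := conv_end u v muV hmuV M
  have hEV := conv_end v u muU hmuU M
  have hFb := conv_end f f 1 hfself M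
  obtain ⟨N1, hN1⟩ := Metric.tendsto_atTop.mp hEU ε' hε'
  obtain ⟨N2, hN2⟩ := Metric.tendsto_atTop.mp hEV ε' hε'
  have hmid : Tendsto (fun n : ℕ => (∑ k ∈ Finset.range (n + 1), f k * f (n - k) / f (n + 1))
      - 2 * ∑ k ∈ Finset.range M, f k * (f (n - k) / f (n + 1))) atTop
      (nhds (2 * L - 2 * (1 * ∑ k ∈ Finset.range M, f k * r ^ (k + 1)))) :=
    hSfull.sub (hFb.const_mul 2)
  have hmidev : ∀ᶠ n in atTop, (∑ k ∈ Finset.range (n + 1), f k * f (n - k) / f (n + 1))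
      - 2 * ∑ k ∈ Finset.range M, f k * (f (n - k) / f (n + 1)) < 3 * ε' := by
    have hML2 := abs_lt.mp hML
    have hlt : 2 * L - 2 * (1 * ∑ k ∈ Finset.range M, f k * r ^ (k + 1)) < 3 * ε' := by
      linarith [hML2.1, hML2.2]
    exact hmid.eventually (eventually_lt_nhds hlt)
  obtain ⟨N3, hN3⟩ := eventually_atTop.mp hmidev
  refine ⟨max (max N1 N2) (max N3 (2 * M)), fun n hn => ?_⟩
  have hnN1 : N1 ≤ n := le_trans (le_trans (le_max_left _ _) (le_max_left _ _)) hn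
  have hnN2 : N2 ≤ n := le_trans (le_trans (le_max_right _ _) (le_max_left _ _)) hn
  have hnN3 : N3 ≤ n := le_trans (le_trans (le_max_left _ _) (le_max_right _ _)) hn
  have hn2M : 2 * M ≤ n := le_trans (le_trans (le_max_right _ _) (le_max_right _ _)) hn
  have split : ∀ (a b : ℕ → ℝ),
      ∑ k ∈ Finset.range (n + 1), a k * b (n - k) / f (n + 1)
      = (∑ k ∈ Finset.range M, a k * (b (n - k) / f (n + 1)))
      + (∑ k ∈ Finset.Ico M (n + 1 - M), a k * b (n - k) / f (n + 1))
      + (∑ k ∈ Finset.range M, b k * (a (n - k) / f (n + 1))) := by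
    intro a b
    have e1 : ∑ k ∈ Finset.Ico 0 M, a k * b (n - k) / f (n + 1)
        = ∑ k ∈ Finset.Ico 0 M, a k * (b (n - k) / f (n + 1)) :=
      Finset.sum_congr rfl fun k _ => mul_div_assoc _ _ _
    have e3 : ∑ k ∈ Finset.Ico (n + 1 - M) (n + 1), a k * b (n - k) / f (n + 1)
        = ∑ k ∈ Finset.Ico 0 M, b k * (a (n - k) / f (n + 1)) := by
      refine Finset.sum_nbij' (fun k => n - k) (fun k => n - k) ?_ ?_ ?_ ?_ ?_
      · intro k hk
        simp only [Finset.mem_Ico] at hk ⊢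
        omega
      · intro k hk
        simp only [Finset.mem_Ico] at hk ⊢
        omega
      · intro k hk
        simp only [Finset.mem_Ico] at hk
        show n - (n - k) = k
        omega
      · intro k hk
        simp only [Finset.mem_Ico] at hk
        show n - (n - k) = k
        omega
      · intro k hk
        simp only [Finset.mem_Ico] at hk
        show a k * b (n - k) / f (n + 1) = b (n - k) * (a (n - (n - k)) / f (n + 1))
        rw [show n - (n - k) = k by omega]
        ring
    rw [Finset.range_eq_Ico,
        ← Finset.sum_Ico_consecutive _ (Nat.zero_le M) (by omega : M ≤ n + 1),
        ← Finset.sum_Ico_consecutive _ (by omega : M ≤ n + 1 - M) (by omega : n + 1 - M ≤ n + 1),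
        e1, e3, ← Finset.range_eq_Ico]
    ring
  rw [split u v]
  have hmid_nonneg : 0 ≤ ∑ k ∈ Finset.Ico M (n + 1 - M), u k * v (n - k) / f (n + 1) :=
    Finset.sum_nonneg fun k _ => div_nonneg (mul_nonneg (hu k).1 (hv (n - k)).1) (hfpos _).le
  have hmid_le : ∑ k ∈ Finset.Ico M (n + 1 - M), u k * v (n - k) / f (n + 1)
      ≤ ∑ k ∈ Finset.Ico M (n + 1 - M), f k * f (n - k) / f (n + 1) := by
    refine Finset.sum_le_sum fun k _ => ?_
    have h := mul_le_mul (hu k).2 (hv (n - k)).2 (hv (n - k)).1 (hfpos k).le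
    exact div_le_div_of_nonneg_right h (hfpos (n + 1)).le |>.trans_eq rfl
  have hmidf : ∑ k ∈ Finset.Ico M (n + 1 - M), f k * f (n - k) / f (n + 1)
      = (∑ k ∈ Finset.range (n + 1), f k * f (n - k) / f (n + 1))
        - 2 * ∑ k ∈ Finset.range M, f k * (f (n - k) / f (n + 1)) := by
    have := split f f
    linarith [this]
  have hmid3 : ∑ k ∈ Finset.Ico M (n + 1 - M), u k * v (n - k) / f (n + 1) < 3 * ε' :=
    lt_of_le_of_lt (hmid_le.trans_eq hmidf) (hN3 n hnN3)
  have hEUa : |(∑ k ∈ Finset.range M, u k * (v (n - k) / f (n + 1)))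
      - muV * ∑ k ∈ Finset.range M, u k * r ^ (k + 1)| < ε' := by
    rw [← Real.dist_eq]; exact hN1 n hnN1
  have hEVa : |(∑ k ∈ Finset.range M, v k * (u (n - k) / f (n + 1)))
      - muU * ∑ k ∈ Finset.range M, v k * r ^ (k + 1)| < ε' := by
    rw [← Real.dist_eq]; exact hN2 n hnN2
  have hEUd := abs_lt.mp hEUa
  have hEVd := abs_lt.mp hEVa
  have hMU' := abs_lt.mp hMU
  have hMV' := abs_lt.mp hMV
  have p1 : 0 ≤ muV * (lU - ∑ k ∈ Finset.range M, u k * r ^ (k + 1)) :=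
    mul_nonneg hmuV0 (by linarith)
  have p2 : muV * (lU - ∑ k ∈ Finset.range M, u k * r ^ (k + 1))
      ≤ lU - ∑ k ∈ Finset.range M, u k * r ^ (k + 1) :=
    mul_le_of_le_one_left (by linarith) hmuV1
  have p3 : 0 ≤ muU * (lV - ∑ k ∈ Finset.range M, v k * r ^ (k + 1)) :=
    mul_nonneg hmuU0 (by linarith)
  have p4 : muU * (lV - ∑ k ∈ Finset.range M, v k * r ^ (k + 1))
      ≤ lV - ∑ k ∈ Finset.range M, v k * r ^ (k + 1) :=
    mul_le_of_le_one_left (by linarith) hmuU1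
  rw [Real.dist_eq, abs_lt]
  constructor
  · linarith [hEUd.1, hEVd.1, hmid_nonneg, p1, p3, hε']
  · linarith [hEUd.2, hEVd.2, hmid3, p2, p4, hε']
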